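/- Let λ>0, ρ(x)=λ^{-1}·exp(-x/λ) for x≥0, let p≥2 be an integer with conjugate exponent p*, and let a>1+1/p*. For ν_a(t)=-λ·a·ln(1-t) on [0,1), one has (∫_0^1 |(d/dt)[ρ(ν_a(t))ν_a'(t)]·(ν_a(t))^{1/p*}|^p dt)^{1/p} = ((a-1)·a^{1+1/p*}/(p(a-2)+1))·λ^{1/p*}·((p-1)!)^{1/p}. -/

import Mathlib

open MeasureTheory Set ENNReal

lemma aux_exp_integral {b q : ℝ} (hb : 0 < b) (hq : -1 < q) :
    IntegrableOn (fun t : ℝ => (1-t) ^ (b-1) * (-Real.log (1-t)) ^ q) (Ioo (0:ℝ) 1) ∧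
    ∫ t in Ioo (0:ℝ) 1, (1-t) ^ (b-1) * (-Real.log (1-t)) ^ q
      = b ^ (-(q+1)) * Real.Gamma (q+1) := by
  set f : ℝ → ℝ := fun u => 1 - Real.exp (-u) with hf
  have himg : f '' Ioi 0 = Ioo (0:ℝ) 1 := by
    ext x
    simp only [hf, mem_image, mem_Ioi, mem_Ioo]
    constructor
    · rintro ⟨u, hu, rfl⟩
      have h1 : Real.exp (-u) < 1 := Real.exp_lt_one_iff.mpr (by linarith)
      have h2 : 0 < Real.exp (-u) := Real.exp_pos _
      constructor <;> linarith
    · rintro ⟨hx0, hx1⟩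
      refine ⟨-Real.log (1-x), ?_, ?_⟩
      · have : Real.log (1-x) < 0 := Real.log_neg (by linarith) (by linarith)
        linarith
      · rw [neg_neg, Real.exp_log (by linarith)]; ring
  have hder : ∀ u ∈ Ioi (0:ℝ), HasDerivWithinAt f (Real.exp (-u)) (Ioi 0) u := by
    intro u _
    have h1 : HasDerivAt (fun u : ℝ => -u) (-1) u := (hasDerivAt_id u).neg
    have h3 := (h1.exp).const_sub 1
    have h : HasDerivAt f (Real.exp (-u)) u := by
      rw [show Real.exp (-u) = -(Real.exp (-u) * -1) by ring]; exact h3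
    exact h.hasDerivWithinAt
  have hinj : InjOn f (Ioi 0) := by
    have hm : StrictMono f := by
      intro u v huv
      simp only [hf, sub_lt_sub_iff_left]
      exact Real.exp_lt_exp.mpr (by linarith)
    exact hm.injective.injOn
  have hcomp : ∀ u ∈ Ioi (0:ℝ),
      |Real.exp (-u)| • ((1 - f u) ^ (b-1) * (-Real.log (1 - f u)) ^ q)
        = u ^ q * Real.exp (-b * u ^ (1:ℝ)) := by
    intro u _
    have h1 : (1:ℝ) - f u = Real.exp (-u) := by simp [hf]
    rw [h1, Real.log_exp, neg_neg, smul_eq_mul, abs_of_pos (Real.exp_pos _),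
      Real.rpow_one, Real.rpow_def_of_pos (Real.exp_pos _), Real.log_exp,
      show Real.exp (-u) * (Real.exp (-u * (b-1)) * u ^ q)
        = (Real.exp (-u) * Real.exp (-u * (b-1))) * u ^ q from by ring,
      ← Real.exp_add, show -u + -u * (b-1) = -b * u from by ring]
    ring
  have hint : IntegrableOn (fun x : ℝ => x ^ q * Real.exp (-b * x ^ (1:ℝ))) (Ioi 0) :=
    integrableOn_rpow_mul_exp_neg_mul_rpow hq one_pos hb
  constructor
  · rw [← himg]
    rw [integrableOn_image_iff_integrableOn_abs_deriv_smul measurableSet_Ioi hder hinj]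
    exact hint.congr_fun (fun u hu => (hcomp u hu).symm) measurableSet_Ioi
  · rw [← himg, integral_image_eq_integral_abs_deriv_smul measurableSet_Ioi hder hinj,
      setIntegral_congr_fun measurableSet_Ioi hcomp,
      integral_rpow_mul_exp_neg_mul_rpow one_pos hq hb]
    simp

theorem h2_Lp_norm_exponential_density
    (lam : ℝ) (hlam : 0 < lam)
    (ρ : ℝ → ℝ) (hρ : ∀ x, ρ x = lam⁻¹ * Real.exp (-x / lam))
    (p : ℕ) (hp : 2 ≤ p)
    (pstar : ℝ) (hpstar : 1 / (p : ℝ) + 1 / pstar = 1)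
    (a : ℝ) (ha : 1 + 1 / pstar < a)
    (ν ν' : ℝ → ℝ)
    (hν : ∀ t, ν t = -(lam * a) * Real.log (1 - t))
    (hν' : ∀ t, ν' t = lam * a / (1 - t)) :
    (∫⁻ t in Ioo (0:ℝ) 1,
        ENNReal.ofReal
          (|deriv (fun s => ρ (ν s) * ν' s) t * ν t ^ (1 / pstar)| ^ (p : ℝ))) ^
        (1 / (p : ℝ)) =
      ENNReal.ofReal
        ((a - 1) * a ^ (1 + 1 / pstar) / ((p : ℝ) * (a - 2) + 1) *
          lam ^ (1 / pstar) * (Nat.factorial (p - 1) : ℝ) ^ (1 / (p : ℝ))) := by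
  have hP2 : (2:ℝ) ≤ (p:ℝ) := by exact_mod_cast hp
  have hP0 : (0:ℝ) < (p:ℝ) := by linarith
  have h1ps : 1 / pstar = 1 - 1 / (p:ℝ) := by linarith
  have hPinv : 1 / (p:ℝ) ≤ 1/2 := by
    rw [div_le_div_iff₀ hP0 two_pos]; linarith
  have hpspos : 0 < 1 / pstar := by rw [h1ps]; linarith
  have ha1 : 1 < a := by linarith
  have ha0 : 0 < a := by linarith
  have hPP : (p:ℝ) * (1/(p:ℝ)) = 1 := by field_simp
  have hc : 0 < (p:ℝ) * (a - 2) + 1 := by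
    have h2 : 1 + (1 - 1/(p:ℝ)) < a := by rw [← h1ps]; exact ha
    nlinarith [mul_lt_mul_of_pos_left h2 hP0, hPP]
  set c : ℝ := (p:ℝ) * (a - 2) + 1 with hcdef
  have hA : (0:ℝ) < a * (a-1) := mul_pos ha0 (by linarith)
  have hM : (0:ℝ) < lam * a := mul_pos hlam ha0
  -- Step 1: the derivative
  have key : ∀ t ∈ Ioo (0:ℝ) 1,
      deriv (fun s => ρ (ν s) * ν' s) t = -(a*(a-1)) * (1-t) ^ (a-2) := by
    intro t ht
    have h1t : 0 < 1 - t := by linarith [ht.2]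
    have heq : (fun s => ρ (ν s) * ν' s) =ᶠ[nhds t] (fun s => a * (1-s) ^ (a-1)) := by
      filter_upwards [Iio_mem_nhds ht.2] with s hs
      have h1s : 0 < 1 - s := by simp only [mem_Iio] at hs; linarith
      rw [hρ, hν, hν']
      have harg : -(-(lam * a) * Real.log (1 - s)) / lam = a * Real.log (1-s) := by
        field_simp
      rw [harg, mul_comm a (Real.log (1-s)), ← Real.rpow_def_of_pos h1s,
        Real.rpow_sub h1s, Real.rpow_one]
      field_simp
    rw [heq.deriv_eq]
    have h1 : HasDerivAt (fun s : ℝ => 1 - s) (-1) t := (hasDerivAt_id t).const_sub 1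
    have h2 := (h1.rpow_const (p := a-1) (Or.inl h1t.ne')).const_mul a
    rw [h2.deriv]
    rw [show a - 1 - 1 = a - 2 by ring]
    ring
  -- Step 2: pointwise formula for the integrand
  set K : ℝ := (a*(a-1)) ^ ((p:ℝ)) * (lam*a) ^ ((p:ℝ)-1) with hKdef
  have hexp1 : (1/pstar) * (p:ℝ) = (p:ℝ) - 1 := by
    rw [h1ps]; field_simp
  have hpt : ∀ t ∈ Ioo (0:ℝ) 1,
      |deriv (fun s => ρ (ν s) * ν' s) t * ν t ^ (1 / pstar)| ^ (p : ℝ)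
        = K * ((1-t) ^ (c - 1) * (-Real.log (1-t)) ^ ((p:ℝ)-1)) := by
    intro t ht
    have h1t : 0 < 1 - t := by linarith [ht.2]
    have hL : 0 ≤ -Real.log (1-t) := by
      have : Real.log (1-t) ≤ 0 :=
        Real.log_nonpos (by linarith [ht.1]) (by linarith [ht.1])
      linarith
    have hbase : 0 ≤ lam * a * -Real.log (1-t) := mul_nonneg hM.le hL
    rw [key t ht, hν t, show -(lam*a) * Real.log (1-t) = (lam*a) * -Real.log (1-t) by ring]
    rw [show (-(a*(a-1)) * (1-t) ^ (a-2)) * ((lam*a) * -Real.log (1-t)) ^ (1/pstar)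
        = -((a*(a-1)) * (1-t) ^ (a-2) * (lam*a * -Real.log (1-t)) ^ (1/pstar)) from by ring,
      abs_neg, abs_of_nonneg (mul_nonneg (mul_nonneg hA.le
        (Real.rpow_nonneg h1t.le _)) (Real.rpow_nonneg hbase _))]
    rw [Real.mul_rpow (mul_nonneg hA.le (Real.rpow_nonneg h1t.le _))
        (Real.rpow_nonneg hbase _),
      Real.mul_rpow hA.le (Real.rpow_nonneg h1t.le _),
      ← Real.rpow_mul h1t.le, ← Real.rpow_mul hbase, hexp1,
      Real.mul_rpow hM.le hL,
      show (a-2) * (p:ℝ) = c - 1 from by rw [hcdef]; ring]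
    rw [hKdef]; ring
  -- Step 3: compute the lintegral
  have hgi := aux_exp_integral hc (by linarith : (-1:ℝ) < (p:ℝ)-1)
  have hcongr : ∫⁻ t in Ioo (0:ℝ) 1,
      ENNReal.ofReal (|deriv (fun s => ρ (ν s) * ν' s) t * ν t ^ (1 / pstar)| ^ (p : ℝ))
      = ∫⁻ t in Ioo (0:ℝ) 1,
        ENNReal.ofReal (K * ((1-t) ^ (c-1) * (-Real.log (1-t)) ^ ((p:ℝ)-1))) := by
    apply setLIntegral_congr_fun measurableSet_Ioo
    exact (fun t ht => by rw [hpt t ht])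
  have hKpos : 0 < K :=
    mul_pos (Real.rpow_pos_of_pos hA _) (Real.rpow_pos_of_pos hM _)
  have hint : IntegrableOn
      (fun t : ℝ => K * ((1-t) ^ (c-1) * (-Real.log (1-t)) ^ ((p:ℝ)-1))) (Ioo (0:ℝ) 1) :=
    hgi.1.const_mul K
  have hnn : 0 ≤ᵐ[volume.restrict (Ioo (0:ℝ) 1)]
      (fun t : ℝ => K * ((1-t) ^ (c-1) * (-Real.log (1-t)) ^ ((p:ℝ)-1))) := by
    filter_upwards [ae_restrict_mem measurableSet_Ioo] with t ht
    have h1t : 0 < 1 - t := by linarith [ht.2]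
    have hL : 0 ≤ -Real.log (1-t) := by
      have : Real.log (1-t) ≤ 0 :=
        Real.log_nonpos (by linarith [ht.1]) (by linarith [ht.1])
      linarith
    exact mul_nonneg hKpos.le
      (mul_nonneg (Real.rpow_nonneg h1t.le _) (Real.rpow_nonneg hL _))
  have hval : ∫ t in Ioo (0:ℝ) 1, K * ((1-t) ^ (c-1) * (-Real.log (1-t)) ^ ((p:ℝ)-1))
      = K * (c ^ (-(p:ℝ)) * Real.Gamma ((p:ℝ))) := by
    rw [integral_const_mul, hgi.2, show (p:ℝ)-1+1 = (p:ℝ) from by ring]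
  have hGamma : Real.Gamma ((p:ℝ)) = (Nat.factorial (p-1) : ℝ) := by
    have h := Real.Gamma_nat_eq_factorial (p-1)
    have hcast : ((p-1 : ℕ) : ℝ) + 1 = (p:ℝ) := by
      have h1 : 1 ≤ p := by omega
      push_cast [Nat.cast_sub h1]
      ring
    rw [hcast] at h
    exact h
  rw [hcongr, ← MeasureTheory.ofReal_integral_eq_lintegral_ofReal hint hnn, hval, hGamma]
  -- Step 4: final arithmetic
  have hF : (0:ℝ) < (Nat.factorial (p-1) : ℝ) := by
    exact_mod_cast Nat.factorial_pos (p-1)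
  have hX : 0 < K * (c ^ (-(p:ℝ)) * (Nat.factorial (p-1) : ℝ)) :=
    mul_pos hKpos (mul_pos (Real.rpow_pos_of_pos hc _) hF)
  rw [ENNReal.ofReal_rpow_of_pos hX]
  congr 1
  have hexp2 : ((p:ℝ)-1) * (1/(p:ℝ)) = 1/pstar := by
    rw [h1ps]; field_simp
  rw [hKdef,
    Real.mul_rpow (mul_nonneg (Real.rpow_nonneg hA.le _)
      (Real.rpow_nonneg hM.le _))
      (mul_nonneg (Real.rpow_nonneg hc.le _) hF.le),
    Real.mul_rpow (Real.rpow_nonneg hA.le _) (Real.rpow_nonneg hM.le _),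
    Real.mul_rpow (Real.rpow_nonneg hc.le _) hF.le,
    ← Real.rpow_mul hA.le,
    ← Real.rpow_mul hM.le,
    ← Real.rpow_mul hc.le,
    hPP, Real.rpow_one, hexp2,
    show -(p:ℝ) * (1/(p:ℝ)) = -1 from by rw [neg_mul, hPP],
    Real.rpow_neg_one,
    Real.mul_rpow hlam.le ha0.le,
    Real.rpow_add ha0, Real.rpow_one]
  ring
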